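/- arXiv:1501.01611 — 2 statements merged into one kernel-verified Lean document; each statement's English description precedes it below -/
import Mathlib

section
/- For every integer m ≥ 2, the sum of W^m over all triples (W, H₁, H₂) of positive integers with W(H₁ + 2H₂) ≤ 2N satisfies: lim_{N→∞} (1/N^{m+1}) ∑_{W(H₁+2H₂)≤2N} W^m = (1/(2(m+1))) · (2^{m+1}·ζ(m) − (2^{m+1}+1)·ζ(m+1)). -/
open Filter Finset

/-- ζ(s) = ∑_{n=1}^∞ 1/n^s for an integer s. -/
noncomputable def zetaVal (s : ℕ) : ℝ := ∑' n : ℕ, 1 / ((n : ℝ) + 1) ^ s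

lemma summable_g (s : ℕ) (hs : 2 ≤ s) : Summable (fun n : ℕ => 1 / ((n:ℝ)+1)^s) := by
  have h : Summable (fun n : ℕ => 1 / ((n:ℝ))^s) :=
    Real.summable_one_div_nat_pow.mpr (lt_of_lt_of_le one_lt_two hs)
  have := (summable_nat_add_iff (f := fun n : ℕ => 1 / ((n:ℝ))^s) 1).mpr h
  refine this.congr fun n => ?_
  push_cast
  ring_nf

lemma g_anti (s : ℕ) {x y : ℝ} (hx : 0 ≤ x) (h : x ≤ y) :
    1 / (y+1)^s ≤ 1 / (x+1)^s := by
  apply one_div_le_one_div_of_le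
  · positivity
  · exact pow_le_pow_left₀ (by linarith) (by linarith) s


-- summable of odd terms
lemma summable_odd (s : ℕ) (hs : 2 ≤ s) (c : ℝ) (hc : 1 ≤ c) :
    Summable (fun n : ℕ => 1 / (2*(n:ℝ)+c)^s) := by
  refine (summable_g s hs).of_nonneg_of_le (fun n => by positivity) (fun n => ?_)
  have h := g_anti s (x := (n:ℝ)) (y := 2*(n:ℝ)+c-1) (by positivity) (by push_cast; linarith)
  convert h using 2
  ring

lemma odd_sum (s : ℕ) (hs : 2 ≤ s) :
    ∑' n : ℕ, 1 / (2*(n:ℝ)+1)^s = zetaVal s - (1/2)^s * zetaVal s := by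
  have hg := summable_g s hs
  have he : Summable (fun k : ℕ => 1 / (((2*k : ℕ):ℝ)+1)^s) := by
    refine (summable_g s hs).of_nonneg_of_le (fun n => by positivity) (fun n => ?_)
    exact g_anti s (by positivity) (by push_cast; linarith)
  have ho : Summable (fun k : ℕ => 1 / (((2*k+1 : ℕ):ℝ)+1)^s) := by
    refine (summable_g s hs).of_nonneg_of_le (fun n => by positivity) (fun n => ?_)
    exact g_anti s (by positivity) (by push_cast; linarith)
  have key := tsum_even_add_odd (f := fun n : ℕ => 1 / ((n:ℝ)+1)^s) he ho
  have h1 : ∑' k : ℕ, 1 / (((2*k : ℕ):ℝ)+1)^s = ∑' n : ℕ, 1 / (2*(n:ℝ)+1)^s := by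
    apply tsum_congr; intro k; push_cast; ring_nf
  have h2 : ∑' k : ℕ, 1 / (((2*k+1 : ℕ):ℝ)+1)^s = (1/2)^s * zetaVal s := by
    rw [show (fun k : ℕ => 1 / (((2*k+1 : ℕ):ℝ)+1)^s)
        = (fun k : ℕ => (1/2:ℝ)^s * (1 / ((k:ℝ)+1)^s)) from ?_]
    · exact tsum_mul_left
    · funext k
      push_cast
      rw [show (2*(k:ℝ)+1+1) = 2*((k:ℝ)+1) by ring, mul_pow]
      rw [div_pow, one_pow]
      field_simp
  rw [h1, h2] at key
  have : zetaVal s = ∑' n : ℕ, 1 / ((n:ℝ)+1)^s := rfl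
  linarith [key]


lemma zeta_sub_one (s : ℕ) (hs : 2 ≤ s) :
    ∑' n : ℕ, 1 / ((n:ℝ)+2)^s = zetaVal s - 1 := by
  have key := Summable.tsum_eq_zero_add (summable_g s hs)
  have h1 : ∑' n : ℕ, 1 / (((n+1:ℕ):ℝ)+1)^s = ∑' n : ℕ, 1 / ((n:ℝ)+2)^s := by
    apply tsum_congr; intro n; push_cast; ring_nf
  rw [h1] at key
  have : zetaVal s = ∑' n : ℕ, 1 / ((n:ℝ)+1)^s := rfl
  rw [← this] at key
  norm_num at key
  simp only [one_div] at key ⊢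
  linarith

lemma odd_shift (s : ℕ) (hs : 2 ≤ s) :
    ∑' n : ℕ, 1 / (2*(n:ℝ)+3)^s = zetaVal s - (1/2)^s * zetaVal s - 1 := by
  have hodd : Summable (fun n : ℕ => 1 / (2*(n:ℝ)+1)^s) := summable_odd s hs 1 le_rfl
  have key := Summable.tsum_eq_zero_add hodd
  have h1 : ∑' n : ℕ, 1 / (2*((n+1:ℕ):ℝ)+1)^s = ∑' n : ℕ, 1 / (2*(n:ℝ)+3)^s := by
    apply tsum_congr; intro n; push_cast; ring_nf
  rw [h1, odd_sum s hs] at key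
  norm_num at key
  simp only [one_div] at key ⊢
  linarith

lemma diag_tsum (u : ℕ → ℝ) (hu0 : ∀ n, 0 ≤ u n)
    (hsum : Summable (fun n : ℕ => ((n:ℝ)+1) * u n)) :
    Summable (fun p : ℕ × ℕ => u (p.1 + p.2)) ∧
      ∑' p : ℕ × ℕ, u (p.1 + p.2) = ∑' n : ℕ, ((n:ℝ)+1) * u n := by
  classical
  set e := Finset.HasAntidiagonal.sigmaAntidiagonalEquivProd (A := ℕ) with he
  have hcomp : ∀ σ : (Σ n : ℕ, Finset.HasAntidiagonal.antidiagonal n),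
      u ((e σ).1 + (e σ).2) = u σ.1 := by
    rintro ⟨n, ⟨⟨k, l⟩, h⟩⟩
    rw [Finset.HasAntidiagonal.mem_antidiagonal] at h
    simp only [he, Finset.HasAntidiagonal.sigmaAntidiagonalEquivProd, Equiv.coe_fn_mk]
    rw [h]
  have hfiber : ∀ n : ℕ, ∑' _ : (Finset.HasAntidiagonal.antidiagonal n : Finset (ℕ × ℕ)), u n
      = ((n:ℝ)+1) * u n := by
    intro n
    rw [tsum_const]
    simp only [Nat.card_eq_fintype_card, Fintype.card_coe, Finset.Nat.card_antidiagonal,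
      nsmul_eq_mul]
    push_cast
    ring
  have hsig : Summable (fun σ : (Σ n : ℕ, Finset.HasAntidiagonal.antidiagonal n) => u σ.1) := by
    apply (summable_sigma_of_nonneg (fun σ => hu0 σ.1)).mpr
    refine ⟨fun n => Summable.of_finite, ?_⟩
    exact hsum.congr fun n => (hfiber n).symm
  have hs2 : Summable (fun p : ℕ × ℕ => u (p.1 + p.2)) := by
    rw [← Equiv.summable_iff e]
    exact hsig.congr fun σ => (hcomp σ).symm
  refine ⟨hs2, ?_⟩
  rw [← Equiv.tsum_eq e (fun p : ℕ × ℕ => u (p.1 + p.2))]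
  rw [tsum_congr hcomp, Summable.tsum_sigma (hsig)]
  exact tsum_congr hfiber

section Bpart
variable (m : ℕ)

/-- the function u -/
noncomputable def ufun (m : ℕ) (k : ℕ) : ℝ :=
  1 / (2*(k:ℝ)+3)^(m+1) + 1 / (2*(k:ℝ)+4)^(m+1)

lemma ufun_nonneg (k : ℕ) : 0 ≤ ufun m k := by unfold ufun; positivity

lemma summable_weighted (hm : 2 ≤ m) :
    Summable (fun n : ℕ => ((n:ℝ)+1) * ufun m n) := by
  have hb : Summable (fun n : ℕ => 2 * (1 / ((n:ℝ)+1)^m)) :=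
    (summable_g m hm).mul_left 2
  refine hb.of_nonneg_of_le (fun n => mul_nonneg (by positivity) (ufun_nonneg m n))
    (fun n => ?_)
  have h1 : 1 / (2*(n:ℝ)+3)^(m+1) ≤ 1 / ((n:ℝ)+1)^(m+1) := by
    have := g_anti (m+1) (x := (n:ℝ)) (y := 2*(n:ℝ)+2) (by positivity) (by linarith [Nat.cast_nonneg (α := ℝ) n])
    convert this using 2; ring
  have h2 : 1 / (2*(n:ℝ)+4)^(m+1) ≤ 1 / ((n:ℝ)+1)^(m+1) := by
    have := g_anti (m+1) (x := (n:ℝ)) (y := 2*(n:ℝ)+3) (by positivity) (by linarith [Nat.cast_nonneg (α := ℝ) n])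
    convert this using 2; ring
  have hu : ufun m n ≤ 2 / ((n:ℝ)+1)^(m+1) := by
    unfold ufun; rw [show (2:ℝ) / ((n:ℝ)+1)^(m+1) = 1/((n:ℝ)+1)^(m+1) + 1/((n:ℝ)+1)^(m+1) by ring]
    exact add_le_add h1 h2
  have hpos : (0:ℝ) < (n:ℝ)+1 := by positivity
  calc ((n:ℝ)+1) * ufun m n ≤ ((n:ℝ)+1) * (2 / ((n:ℝ)+1)^(m+1)) := by
        exact mul_le_mul_of_nonneg_left hu (by positivity)
    _ = 2 * (1 / ((n:ℝ)+1)^m) := by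
        rw [pow_succ]
        field_simp

lemma slice_eq (hm : 2 ≤ m) (b : ℕ) :
    Summable (fun a : ℕ => 1 / ((a:ℝ) + 2*(b:ℝ) + 3)^(m+1)) ∧
    ∑' a : ℕ, 1 / ((a:ℝ) + 2*(b:ℝ) + 3)^(m+1) = ∑' i : ℕ, ufun m (i + b) := by
  have hq : 2 ≤ m + 1 := by omega
  have hf : Summable (fun a : ℕ => 1 / ((a:ℝ) + 2*(b:ℝ) + 3)^(m+1)) := by
    have := (summable_nat_add_iff (f := fun n : ℕ => 1 / ((n:ℝ)+1)^(m+1)) (2*b+2)).mpr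
      (summable_g (m+1) hq)
    refine this.congr fun a => ?_
    push_cast; ring_nf
  refine ⟨hf, ?_⟩
  have he : Summable (fun i : ℕ => 1 / ((((2*i:ℕ)):ℝ) + 2*(b:ℝ) + 3)^(m+1)) := by
    refine hf.of_nonneg_of_le (fun i => by positivity) (fun i => ?_)
    have := g_anti (m+1) (x := (i:ℝ) + 2*(b:ℝ) + 2) (y := 2*(i:ℝ) + 2*(b:ℝ) + 2)
      (by positivity) (by linarith [Nat.cast_nonneg (α := ℝ) i])
    convert this using 2 <;> push_cast <;> ring
  have ho : Summable (fun i : ℕ => 1 / ((((2*i+1:ℕ)):ℝ) + 2*(b:ℝ) + 3)^(m+1)) := by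
    refine hf.of_nonneg_of_le (fun i => by positivity) (fun i => ?_)
    have := g_anti (m+1) (x := (i:ℝ) + 2*(b:ℝ) + 2) (y := 2*(i:ℝ) + 2*(b:ℝ) + 3)
      (by positivity) (by linarith [Nat.cast_nonneg (α := ℝ) i])
    convert this using 2 <;> push_cast <;> ring
  have key := tsum_even_add_odd (f := fun a : ℕ => 1 / ((a:ℝ) + 2*(b:ℝ) + 3)^(m+1)) he ho
  rw [← key, ← Summable.tsum_add he ho]
  apply tsum_congr
  intro i
  unfold ufun
  push_cast
  ring_nf

lemma Bsum (hm : 2 ≤ m) :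
    Summable (fun p : ℕ × ℕ => 1 / ((p.2:ℝ) + 2*(p.1:ℝ) + 3)^(m+1)) ∧
    ∑' p : ℕ × ℕ, 1 / ((p.2:ℝ) + 2*(p.1:ℝ) + 3)^(m+1)
      = ∑' n : ℕ, ((n:ℝ)+1) * ufun m n := by
  obtain ⟨hV, hVal⟩ := diag_tsum (ufun m) (ufun_nonneg m) (summable_weighted m hm)
  have hslice := slice_eq m hm
  have hfib : Summable (fun b : ℕ => ∑' a : ℕ, 1 / ((a:ℝ) + 2*(b:ℝ) + 3)^(m+1)) := by
    have := hV.prod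
    refine this.congr fun b => ?_
    rw [(hslice b).2]
    apply tsum_congr; intro i; rw [Nat.add_comm i b]
  have hprod : Summable (fun p : ℕ × ℕ => 1 / ((p.2:ℝ) + 2*(p.1:ℝ) + 3)^(m+1)) := by
    apply (summable_prod_of_nonneg (fun p => by positivity)).mpr
    exact ⟨fun b => (hslice b).1, hfib⟩
  refine ⟨hprod, ?_⟩
  rw [Summable.tsum_prod hprod]
  calc ∑' (b : ℕ) (a : ℕ), 1 / ((a:ℝ) + 2*(b:ℝ) + 3)^(m+1)
      = ∑' (b : ℕ) (i : ℕ), ufun m (b + i) := by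
        apply tsum_congr; intro b
        rw [(hslice b).2]
        apply tsum_congr; intro i; rw [Nat.add_comm i b]
    _ = ∑' p : ℕ × ℕ, ufun m (p.1 + p.2) := (Summable.tsum_prod hV).symm
    _ = ∑' n : ℕ, ((n:ℝ)+1) * ufun m n := hVal

end Bpart

lemma weighted_val (m : ℕ) (hm : 2 ≤ m) :
    ∑' n : ℕ, ((n:ℝ)+1) * ufun m n
      = (1/2)*(zetaVal m - (1/2)^m * zetaVal m - 1)
        - (1/2)*(zetaVal (m+1) - (1/2)^(m+1) * zetaVal (m+1) - 1)
        + (1/2)^(m+1)*((zetaVal m - 1) - (zetaVal (m+1) - 1)) := by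
  have hq : 2 ≤ m + 1 := by omega
  have ha : Summable (fun n : ℕ => 1 / (2*(n:ℝ)+3)^m) := summable_odd m hm 3 (by norm_num)
  have hb : Summable (fun n : ℕ => 1 / (2*(n:ℝ)+3)^(m+1)) := summable_odd (m+1) hq 3 (by norm_num)
  have hd : Summable (fun n : ℕ => 1 / ((n:ℝ)+2)^m) := by
    have := (summable_nat_add_iff (f := fun n : ℕ => 1 / ((n:ℝ)+1)^m) 1).mpr (summable_g m hm)
    refine this.congr fun n => ?_; push_cast; ring_nf
  have he : Summable (fun n : ℕ => 1 / ((n:ℝ)+2)^(m+1)) := by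
    have := (summable_nat_add_iff (f := fun n : ℕ => 1 / ((n:ℝ)+1)^(m+1)) 1).mpr (summable_g (m+1) hq)
    refine this.congr fun n => ?_; push_cast; ring_nf
  have hpt : ∀ n : ℕ, ((n:ℝ)+1) * ufun m n
      = ((1/2)*(1 / (2*(n:ℝ)+3)^m) - (1/2)*(1 / (2*(n:ℝ)+3)^(m+1)))
        + ((1/2)^(m+1)*(1 / ((n:ℝ)+2)^m) - (1/2)^(m+1)*(1 / ((n:ℝ)+2)^(m+1))) := by
    intro n
    have h3 : (2*(n:ℝ)+3) ≠ 0 := by positivity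
    have h4 : ((n:ℝ)+2) ≠ 0 := by positivity
    have e1 : 1/(2*(n:ℝ)+4)^(m+1) = (1/2)^(m+1) * (1/((n:ℝ)+2)^(m+1)) := by
      rw [show 2*(n:ℝ)+4 = 2*((n:ℝ)+2) by ring, mul_pow, div_pow, one_pow]
      rw [div_mul_div_comm, one_mul]
    unfold ufun
    rw [e1, pow_succ (2*(n:ℝ)+3), pow_succ ((n:ℝ)+2)]
    field_simp
    ring
  rw [tsum_congr hpt]
  rw [Summable.tsum_add (((ha.mul_left _).sub (hb.mul_left _))) (((hd.mul_left _).sub (he.mul_left _)))]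
  rw [Summable.tsum_sub (ha.mul_left _) (hb.mul_left _), Summable.tsum_sub (hd.mul_left _) (he.mul_left _)]
  rw [tsum_mul_left, tsum_mul_left, tsum_mul_left, tsum_mul_left]
  rw [odd_shift m hm, odd_shift (m+1) hq, zeta_sub_one m hm, zeta_sub_one (m+1) hq]
  ring

lemma bern1 (m : ℕ) (hm : 1 ≤ m) (x : ℝ) (hx : 0 ≤ x) :
    x^(m+1) + ((m:ℝ)+1)*x^m ≤ (x+1)^(m+1) := by
  rcases eq_or_lt_of_le hx with h0 | hx'
  · rw [← h0]
    rw [zero_pow (by omega : m + 1 ≠ 0), zero_pow (by omega : m ≠ 0)]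
    norm_num
  · have hneg : (-2:ℝ) ≤ 1/x := by
      have : (0:ℝ) ≤ 1/x := by positivity
      linarith
    have h := one_add_mul_le_pow (a := 1/x) hneg (m+1)
    have h2 := mul_le_mul_of_nonneg_right h (le_of_lt (pow_pos hx' (m+1)))
    push_cast at h2
    have e1 : (1 + 1/x)^(m+1) * x^(m+1) = (x+1)^(m+1) := by
      rw [← mul_pow]
      congr 1
      field_simp
    have e2 : (1 + ((m:ℝ)+1) * (1/x)) * x^(m+1) = x^(m+1) + ((m:ℝ)+1)*x^m := by
      rw [pow_succ]
      field_simp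
    rw [e1, e2] at h2
    exact_mod_cast h2

lemma bern2 (m : ℕ) (x : ℝ) (hx : 0 ≤ x) :
    (x+1)^(m+1) ≤ x^(m+1) + ((m:ℝ)+1)*(x+1)^m := by
  have hx1 : (0:ℝ) < x + 1 := by linarith
  have h := one_add_mul_le_pow (a := -(1/(x+1)))
    (by
      have h1 : 1/(x+1) ≤ 1 := by rw [div_le_one hx1]; linarith
      have : (0:ℝ) < 1/(x+1) := by positivity
      linarith) (m+1)
  push_cast at h
  have h2 := mul_le_mul_of_nonneg_right h (le_of_lt (pow_pos hx1 (m+1)))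
  have e1 : (1 + -(1/(x+1)))^(m+1) * (x+1)^(m+1) = x^(m+1) := by
    rw [← mul_pow]
    congr 1
    field_simp
    ring
  have e2 : (1 + ((m:ℝ)+1) * -(1/(x+1))) * (x+1)^(m+1)
      = (x+1)^(m+1) - ((m:ℝ)+1)*(x+1)^m := by
    rw [pow_succ]
    field_simp
    ring
  rw [e1, e2] at h2
  linarith

lemma sum_pow_lower (m : ℕ) (hm : 1 ≤ m) (K : ℕ) :
    (K:ℝ)^(m+1) ≤ ((m:ℝ)+1) * ∑ w ∈ range K, ((w:ℝ)+1)^m := by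
  induction K with
  | zero => simp [zero_pow]
  | succ K ih =>
      rw [Finset.sum_range_succ, mul_add]
      have h := bern2 m (K:ℝ) (Nat.cast_nonneg K)
      push_cast
      push_cast at ih
      nlinarith [h, ih]

lemma sum_pow_upper (m : ℕ) (hm : 1 ≤ m) (K : ℕ) :
    ((m:ℝ)+1) * ∑ w ∈ range K, ((w:ℝ)+1)^m ≤ ((K:ℝ)+1)^(m+1) := by
  induction K with
  | zero => simp
  | succ K ih =>
      rw [Finset.sum_range_succ, mul_add]
      have h := bern1 m hm ((K:ℝ)+1) (by positivity)
      push_cast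
      push_cast at ih
      nlinarith [h, ih]

lemma sum_pow_le (m K : ℕ) :
    ∑ w ∈ range K, ((w:ℝ)+1)^m ≤ (K:ℝ)^(m+1) := by
  calc ∑ w ∈ range K, ((w:ℝ)+1)^m ≤ ∑ _w ∈ range K, (K:ℝ)^m := by
        apply Finset.sum_le_sum
        intro w hw
        have hw' : w < K := Finset.mem_range.mp hw
        apply pow_le_pow_left₀ (by positivity)
        exact_mod_cast hw'
    _ = (K:ℝ) * (K:ℝ)^m := by rw [Finset.sum_const, Finset.card_range, nsmul_eq_mul]
    _ = (K:ℝ)^(m+1) := by rw [pow_succ]; ring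

lemma Ktend (s : ℕ) (hs : 0 < s) :
    Tendsto (fun N : ℕ => ((2*N/s : ℕ):ℝ)/(N:ℝ)) atTop (nhds (2/(s:ℝ))) := by
  have hs' : (0:ℝ) < s := by exact_mod_cast hs
  have hlo : Tendsto (fun N : ℕ => 2/(s:ℝ) - 1/(N:ℝ)) atTop (nhds (2/(s:ℝ))) := by
    have := (tendsto_const_nhds (x := 2/(s:ℝ)) (f := atTop (α := ℕ))).sub
      tendsto_one_div_atTop_nhds_zero_nat
    simpa using this
  have hhi : Tendsto (fun _ : ℕ => 2/(s:ℝ)) atTop (nhds (2/(s:ℝ))) := tendsto_const_nhds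
  refine tendsto_of_tendsto_of_tendsto_of_le_of_le' hlo hhi ?_ ?_
  · filter_upwards [eventually_ge_atTop 1] with N hN
    have hN' : (0:ℝ) < N := by exact_mod_cast hN
    have hlt : 2*N < (2*N/s + 1) * s := (Nat.div_lt_iff_lt_mul hs).mp (Nat.lt_succ_self _)
    have hltR : 2*(N:ℝ) < (((2*N/s : ℕ):ℝ) + 1) * s := by exact_mod_cast hlt
    rw [div_sub_div _ _ hs'.ne' hN'.ne', div_le_div_iff₀ (by positivity) hN']
    nlinarith [mul_lt_mul_of_pos_right hltR hN']
  · filter_upwards [eventually_ge_atTop 1] with N hN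
    have hN' : (0:ℝ) < N := by exact_mod_cast hN
    have h1 : ((2*N/s : ℕ):ℝ) ≤ ((2*N : ℕ):ℝ)/(s:ℝ) := Nat.cast_div_le
    push_cast at h1
    rw [div_le_div_iff₀ hN' hs']
    have h2 : (2*(N:ℝ)/s)*s = 2*N := by field_simp
    nlinarith [mul_le_mul_of_nonneg_right h1 hs'.le]

lemma G_tendsto (m s : ℕ) (hm : 1 ≤ m) (hs : 0 < s) :
    Tendsto (fun N : ℕ => (∑ w ∈ range (2*N/s), ((w:ℝ)+1)^m) / (N:ℝ)^(m+1)) atTop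
      (nhds ((2/(s:ℝ))^(m+1)/((m:ℝ)+1))) := by
  have hm1 : (0:ℝ) < (m:ℝ)+1 := by positivity
  have hlo : Tendsto (fun N : ℕ => (((2*N/s : ℕ):ℝ)/(N:ℝ))^(m+1)/((m:ℝ)+1)) atTop
      (nhds ((2/(s:ℝ))^(m+1)/((m:ℝ)+1))) := ((Ktend s hs).pow (m+1)).div_const _
  have hhi : Tendsto (fun N : ℕ => ((((2*N/s : ℕ):ℝ)+1)/(N:ℝ))^(m+1)/((m:ℝ)+1)) atTop
      (nhds ((2/(s:ℝ))^(m+1)/((m:ℝ)+1))) := by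
    have h2 : Tendsto (fun N : ℕ => (((2*N/s : ℕ):ℝ)+1)/(N:ℝ)) atTop (nhds (2/(s:ℝ))) := by
      have := (Ktend s hs).add tendsto_one_div_atTop_nhds_zero_nat
      simp only [add_zero] at this
      refine this.congr fun N => ?_
      rw [← add_div]
    exact (h2.pow (m+1)).div_const _
  refine tendsto_of_tendsto_of_tendsto_of_le_of_le' hlo hhi ?_ ?_
  · filter_upwards [eventually_ge_atTop 1] with N hN
    have hN' : (0:ℝ) < N := by exact_mod_cast hN
    have h1 := sum_pow_lower m hm (2*N/s)
    rw [div_pow, div_div, div_le_div_iff₀ (by positivity) (by positivity)]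
    nlinarith [h1, pow_pos hN' (m+1), pow_nonneg (Nat.cast_nonneg (α := ℝ) (2*N/s)) (m+1)]
  · filter_upwards [eventually_ge_atTop 1] with N hN
    have hN' : (0:ℝ) < N := by exact_mod_cast hN
    have h1 := sum_pow_upper m hm (2*N/s)
    rw [div_pow, div_div, div_le_div_iff₀ (by positivity) (by positivity)]
    nlinarith [h1, pow_pos hN' (m+1), pow_nonneg (by positivity : (0:ℝ) ≤ ((2*N/s : ℕ):ℝ)+1) (m+1),
      Finset.sum_nonneg (fun w _ => by positivity : ∀ w ∈ range (2*N/s), (0:ℝ) ≤ ((w:ℝ)+1)^m)]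

def tripleEquiv : (ℕ × ℕ) × ℕ ≃ ℕ+ × ℕ+ × ℕ+ where
  toFun x := (x.2.succPNat, x.1.2.succPNat, x.1.1.succPNat)
  invFun t := ((t.2.2.natPred, t.2.1.natPred), t.1.natPred)
  left_inv x := by simp
  right_inv t := by simp

lemma innerSumEq (m N s : ℕ) (hs : 0 < s) :
    ∑' w : ℕ, (if (w+1) * s ≤ 2*N then (((w+1:ℕ)):ℝ)^m else 0)
      = ∑ w ∈ range (2*N/s), ((w:ℝ)+1)^m := by
  rw [tsum_eq_sum (s := range (2*N/s)) ?_]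
  · apply Finset.sum_congr rfl
    intro w hw
    have hw' : w < 2*N/s := Finset.mem_range.mp hw
    have hcond : (w+1) * s ≤ 2*N := (Nat.le_div_iff_mul_le hs).mp hw'
    rw [if_pos hcond]
    push_cast
    ring
  · intro w hw
    have hw' : ¬ (w < 2*N/s) := fun h => hw (Finset.mem_range.mpr h)
    have : ¬ ((w+1) * s ≤ 2*N) := by
      intro hc
      exact hw' (Nat.lt_of_lt_of_le (Nat.lt_succ_self w) ((Nat.le_div_iff_mul_le hs).mpr hc))
    rw [if_neg this]

lemma triple_summable (m N : ℕ) :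
    Summable (fun x : (ℕ × ℕ) × ℕ =>
      if (x.2+1) * (x.1.2 + 2*x.1.1 + 3) ≤ 2*N then (((x.2+1:ℕ)):ℝ)^m else 0) := by
  apply summable_of_ne_finset_zero (s := (range (2*N) ×ˢ range (2*N)) ×ˢ range (2*N))
  intro x hx
  rw [if_neg]
  intro hc
  apply hx
  have h1 : x.1.2 + 2*x.1.1 + 3 ≤ 2*N := le_trans (Nat.le_mul_of_pos_left _ (Nat.succ_pos _)) hc
  have h2 : x.2 + 1 ≤ 2*N := by
    calc x.2 + 1 ≤ (x.2+1) * (x.1.2 + 2*x.1.1 + 3) := Nat.le_mul_of_pos_right _ (by omega)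
      _ ≤ 2*N := hc
  simp only [Finset.mem_product, Finset.mem_range]
  omega

lemma step_A (m N : ℕ) :
    (∑' t : ℕ+ × ℕ+ × ℕ+,
        if (t.1 : ℕ) * ((t.2.1 : ℕ) + 2 * (t.2.2 : ℕ)) ≤ 2 * N then
          ((t.1 : ℕ) : ℝ) ^ m
        else 0) / (N:ℝ)^(m+1)
    = ∑' p : ℕ × ℕ,
        (∑ w ∈ range (2*N/(p.2 + 2*p.1 + 3)), ((w:ℝ)+1)^m) / (N:ℝ)^(m+1) := by
  rw [← Equiv.tsum_eq tripleEquiv (fun t : ℕ+ × ℕ+ × ℕ+ =>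
    if (t.1 : ℕ) * ((t.2.1 : ℕ) + 2 * (t.2.2 : ℕ)) ≤ 2 * N then ((t.1 : ℕ) : ℝ) ^ m else 0)]
  have hcongr : ∀ x : (ℕ × ℕ) × ℕ,
      (if ((tripleEquiv x).1 : ℕ) * (((tripleEquiv x).2.1 : ℕ) + 2 * ((tripleEquiv x).2.2 : ℕ)) ≤ 2 * N
        then (((tripleEquiv x).1 : ℕ) : ℝ) ^ m else 0)
      = (if (x.2+1) * (x.1.2 + 2*x.1.1 + 3) ≤ 2*N then (((x.2+1:ℕ)):ℝ)^m else 0) := by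
    rintro ⟨⟨b, a⟩, w⟩
    simp only [tripleEquiv, Equiv.coe_fn_mk, Nat.succPNat_coe]
    have : (a + 1) + 2 * (b + 1) = a + 2*b + 3 := by ring
    simp only [Nat.succ_eq_add_one, this]
  rw [tsum_congr hcongr]
  rw [Summable.tsum_prod (triple_summable m N)]
  rw [← tsum_div_const]
  apply tsum_congr
  intro p
  rw [← innerSumEq m N (p.2 + 2*p.1 + 3) (by omega)]

theorem combi1 (m : ℕ) (hm : 2 ≤ m) :
    Filter.Tendsto
      (fun N : ℕ =>
        (∑' t : ℕ+ × ℕ+ × ℕ+,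
            if (t.1 : ℕ) * ((t.2.1 : ℕ) + 2 * (t.2.2 : ℕ)) ≤ 2 * N then
              ((t.1 : ℕ) : ℝ) ^ m
            else 0)
          / (N : ℝ) ^ (m + 1))
      Filter.atTop
      (nhds ((1 / (2 * ((m : ℝ) + 1))) *
        (2 ^ (m + 1) * zetaVal m - (2 ^ (m + 1) + 1) * zetaVal (m + 1)))) := by
  have hm1 : 1 ≤ m := by omega
  obtain ⟨hBsummable, hBval⟩ := Bsum m hm
  have hboundsum : Summable (fun p : ℕ × ℕ =>
      2^(m+1) * (1 / ((p.2:ℝ) + 2*(p.1:ℝ) + 3)^(m+1))) := hBsummable.mul_left _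
  have hab : ∀ p : ℕ × ℕ, Tendsto (fun N : ℕ =>
      (∑ w ∈ range (2*N/(p.2 + 2*p.1 + 3)), ((w:ℝ)+1)^m) / (N:ℝ)^(m+1)) atTop
      (nhds ((2/(((p.2 + 2*p.1 + 3 : ℕ)):ℝ))^(m+1)/((m:ℝ)+1))) :=
    fun p => G_tendsto m _ hm1 (by omega)
  have h_bound : ∀ᶠ N in (atTop : Filter ℕ), ∀ p : ℕ × ℕ,
      ‖(∑ w ∈ range (2*N/(p.2 + 2*p.1 + 3)), ((w:ℝ)+1)^m) / (N:ℝ)^(m+1)‖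
        ≤ 2^(m+1) * (1 / ((p.2:ℝ) + 2*(p.1:ℝ) + 3)^(m+1)) := by
    filter_upwards [eventually_ge_atTop 1] with N hN p
    have hN' : (0:ℝ) < N := by exact_mod_cast hN
    set s := p.2 + 2*p.1 + 3 with hsdef
    have hs0 : (0:ℝ) < (s:ℝ) := by positivity
    rw [Real.norm_eq_abs, abs_of_nonneg (by positivity)]
    have h1 : (∑ w ∈ range (2*N/s), ((w:ℝ)+1)^m) ≤ ((2*N/s:ℕ):ℝ)^(m+1) := sum_pow_le m _
    have h2 : ((2*N/s:ℕ):ℝ) ≤ ((2*N:ℕ):ℝ)/(s:ℝ) := Nat.cast_div_le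
    have h3 : ((2*N/s:ℕ):ℝ)^(m+1) ≤ (((2*N:ℕ):ℝ)/(s:ℝ))^(m+1) :=
      pow_le_pow_left₀ (Nat.cast_nonneg _) h2 _
    calc (∑ w ∈ range (2*N/s), ((w:ℝ)+1)^m) / (N:ℝ)^(m+1)
        ≤ (((2*N:ℕ):ℝ)/(s:ℝ))^(m+1) / (N:ℝ)^(m+1) := by
          apply div_le_div_of_nonneg_right ?_ (by positivity) |>.trans_eq rfl
          exact le_trans h1 h3
      _ = 2^(m+1) * (1 / ((p.2:ℝ) + 2*(p.1:ℝ) + 3)^(m+1)) := by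
          have hsr : ((s:ℕ):ℝ) = (p.2:ℝ) + 2*(p.1:ℝ) + 3 := by rw [hsdef]; push_cast; ring
          rw [← hsr]
          push_cast
          rw [div_pow, mul_pow]
          field_simp
  have key := tendsto_tsum_of_dominated_convergence hboundsum hab h_bound
  have keq : (fun N : ℕ => ∑' p : ℕ × ℕ,
      (∑ w ∈ range (2*N/(p.2 + 2*p.1 + 3)), ((w:ℝ)+1)^m) / (N:ℝ)^(m+1))
      = (fun N : ℕ =>
        (∑' t : ℕ+ × ℕ+ × ℕ+,
            if (t.1 : ℕ) * ((t.2.1 : ℕ) + 2 * (t.2.2 : ℕ)) ≤ 2 * N then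
              ((t.1 : ℕ) : ℝ) ^ m
            else 0)
          / (N : ℝ) ^ (m + 1)) := by
    funext N
    exact (step_A m N).symm
  rw [keq] at key
  have hLval : ∑' p : ℕ × ℕ, (2/(((p.2 + 2*p.1 + 3 : ℕ)):ℝ))^(m+1)/((m:ℝ)+1)
      = (1 / (2 * ((m : ℝ) + 1))) *
        (2 ^ (m + 1) * zetaVal m - (2 ^ (m + 1) + 1) * zetaVal (m + 1)) := by
    have hpt : ∀ p : ℕ × ℕ, (2/(((p.2 + 2*p.1 + 3 : ℕ)):ℝ))^(m+1)/((m:ℝ)+1)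
        = (2^(m+1)/((m:ℝ)+1)) * (1 / ((p.2:ℝ) + 2*(p.1:ℝ) + 3)^(m+1)) := by
      intro p
      have hsr : ((p.2 + 2*p.1 + 3 : ℕ):ℝ) = (p.2:ℝ) + 2*(p.1:ℝ) + 3 := by push_cast; ring
      rw [hsr, div_pow]
      have hd : ((p.2:ℝ) + 2*(p.1:ℝ) + 3) ≠ 0 := by positivity
      field_simp
    rw [tsum_congr hpt, tsum_mul_left, hBval, weighted_val m hm]
    have h2m : (2:ℝ)^m ≠ 0 := by positivity
    have hm0 : ((m:ℝ)+1) ≠ 0 := by positivity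
    rw [pow_succ (2:ℝ) m, pow_succ ((1:ℝ)/2) m]
    rw [div_pow, one_pow]
    field_simp
    ring
  rw [← hLval]
  exact key
end

section
/- Let m be a nonnegative integer, ρ a real number, and (a_d)_{d≥1} a sequence of real numbers such that a_d/d^m → ρ as d → ∞. Then the power series ∑_{d=1}^∞ a_d q^d converges for every real q with 0 ≤ q < 1, and lim_{q→1⁻} (1−q)^{m+1} · ∑_{d=1}^∞ a_d q^d = ρ · m!. -/
open Filter Finset Asymptotics Topology

namespace AbelAux

noncomputable def c (m d : ℕ) : ℝ := ((d + m).choose m : ℝ)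

lemma c_pos (m d : ℕ) : 0 < c m d := by
  unfold c
  exact_mod_cast Nat.choose_pos (Nat.le_add_left m d)

lemma hasSum_c {m : ℕ} {q : ℝ} (hq : |q| < 1) :
    HasSum (fun d => c m d * q ^ d) (1 / (1 - q) ^ (m + 1)) := by
  simpa [c] using hasSum_choose_mul_geometric_of_norm_lt_one (𝕜 := ℝ) m
    (by simpa [Real.norm_eq_abs] using hq)

lemma summable_of_isBigO_c {m : ℕ} {f : ℕ → ℝ} (hf : f =O[atTop] fun d => c m d)
    {q : ℝ} (hq : |q| < 1) : Summable (fun d => f d * q ^ d) := by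
  apply summable_of_isBigO_nat (g := fun d => c m d * |q| ^ d)
  · exact (hasSum_c (m := m) (q := |q|) (by simpa using hq)).summable
  · exact hf.mul (isBigO_of_le _ (fun d => by simp [abs_pow]))

lemma isBigO_c_of_tendsto {m : ℕ} {f : ℕ → ℝ} {L : ℝ}
    (h : Tendsto (fun d => f d / c m d) atTop (𝓝 L)) :
    f =O[atTop] fun d => c m d := by
  have h1 : (fun d => f d / c m d) =O[atTop] (fun _ => (1 : ℝ)) := h.isBigO_one ℝ
  have h2 := h1.mul (isBigO_refl (fun d => c m d) atTop)
  refine (h2.congr (fun d => ?_) (fun d => one_mul _))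
  exact div_mul_cancel₀ _ (c_pos m d).ne'


lemma prod_asc (m d : ℕ) : (m.factorial : ℝ) * c m d = ∏ i ∈ range m, ((d : ℝ) + 1 + i) := by
  have h : (d + 1).ascFactorial m = ∏ i ∈ range m, (d + 1 + i) := by
    induction m with
    | zero => simp
    | succ k ih => rw [Nat.ascFactorial_succ, prod_range_succ, ih, Nat.mul_comm]
  have h2 : (d + 1).ascFactorial m = m.factorial * (d + m).choose m :=
    Nat.ascFactorial_eq_factorial_mul_choose d m
  have h3 := congrArg (fun n : ℕ => (n : ℝ)) (h2.symm.trans h)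
  push_cast at h3
  simpa [c] using h3

lemma tendsto_ratio (m : ℕ) :
    Tendsto (fun d : ℕ => ((d : ℝ) + 1) ^ m / c m d) atTop (𝓝 (m.factorial : ℝ)) := by
  have h1 : ∀ i : ℕ, Tendsto (fun d : ℕ => ((d : ℝ) + 1) / ((d : ℝ) + 1 + i)) atTop (𝓝 1) := by
    intro i
    have hden : Tendsto (fun d : ℕ => (d : ℝ) + 1 + i) atTop atTop := by
      have := tendsto_atTop_add_const_right atTop ((1 : ℝ) + i) tendsto_natCast_atTop_atTop
      exact this.congr (fun d => by ring)
    have hd : Tendsto (fun d : ℕ => (i : ℝ) / ((d : ℝ) + 1 + i)) atTop (𝓝 0) :=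
      Tendsto.div_atTop tendsto_const_nhds hden
    have heq : ∀ d : ℕ, 1 - (i : ℝ) / ((d : ℝ) + 1 + i) = ((d : ℝ) + 1) / ((d : ℝ) + 1 + i) := by
      intro d
      have hne : ((d : ℝ) + 1 + i) ≠ 0 := by positivity
      field_simp
      ring
    have := (tendsto_const_nhds.sub hd).congr heq
    simpa using this
  have h2 : Tendsto (fun d : ℕ => ∏ i ∈ range m, (((d : ℝ) + 1) / ((d : ℝ) + 1 + i))) atTop
      (𝓝 (∏ _i ∈ range m, (1 : ℝ))) := tendsto_finset_prod _ (fun i _ => h1 i)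
  have h3 := h2.const_mul (m.factorial : ℝ)
  have key : ∀ d : ℕ, (m.factorial : ℝ) * ∏ i ∈ range m, (((d : ℝ) + 1) / ((d : ℝ) + 1 + i))
      = ((d : ℝ) + 1) ^ m / c m d := by
    intro d
    rw [Finset.prod_div_distrib, Finset.prod_const, Finset.card_range]
    have hpa := prod_asc m d
    have hc := (c_pos m d).ne'
    have hp : (∏ i ∈ range m, ((d : ℝ) + 1 + i)) ≠ 0 := by positivity
    have hfac : (m.factorial : ℝ) ≠ 0 := by positivity
    rw [← hpa]
    field_simp
  simpa using h3.congr key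


set_option maxHeartbeats 1000000 in
lemma main0 {m : ℕ} {e : ℕ → ℝ}
    (h : Tendsto (fun d => e d / c m d) atTop (𝓝 0)) :
    Tendsto (fun q : ℝ => (1 - q) ^ (m + 1) * ∑' d : ℕ, e d * q ^ d)
      (nhdsWithin 1 (Set.Iio 1)) (𝓝 0) := by
  have hO : e =O[atTop] fun d => c m d := isBigO_c_of_tendsto h
  have hOa : (fun d => |e d|) =O[atTop] fun d => c m d := by
    simpa [Real.norm_eq_abs] using hO.norm_left
  rw [Metric.tendsto_nhds]
  intro ε hε
  -- choose N
  obtain ⟨N, hN⟩ := (Metric.tendsto_atTop.1 h) (ε / 4) (by positivity)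
  have hNe : ∀ d, N ≤ d → |e d| ≤ ε / 4 * c m d := by
    intro d hd
    have := hN d hd
    rw [Real.dist_eq, sub_zero, abs_div, abs_of_pos (c_pos m d)] at this
    have hc := c_pos m d
    calc |e d| = |e d| / c m d * c m d := by field_simp
      _ ≤ ε / 4 * c m d := by
          apply mul_le_mul_of_nonneg_right this.le hc.le
  set M : ℝ := ∑ i ∈ range N, |e i| with hM
  have hM0 : 0 ≤ M := Finset.sum_nonneg fun i _ => abs_nonneg _
  set δ : ℝ := min 1 (ε / (2 * (M + 1))) with hδ
  have hδ0 : 0 < δ := lt_min one_pos (by positivity)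
  have hmax : max (1 - δ) 0 < 1 := by
    apply max_lt _ one_pos
    linarith
  filter_upwards [Ioo_mem_nhdsLT_of_mem
    (Set.mem_Ioc.2 ⟨hmax, le_refl (1:ℝ)⟩ : (1:ℝ) ∈ Set.Ioc (max (1 - δ) 0) 1)] with q hq
  have hq0 : 0 < q := lt_of_le_of_lt (le_max_right _ _) hq.1
  have hq1 : q < 1 := hq.2
  have hqd : 1 - q < δ := by
    have := lt_of_le_of_lt (le_max_left (1 - δ) 0) hq.1
    linarith
  have habs : |q| < 1 := abs_lt.2 ⟨by linarith, hq1⟩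
  have hs1 : Summable (fun d => e d * q ^ d) := summable_of_isBigO_c hO habs
  have hs2 : Summable (fun d => |e d| * q ^ d) := summable_of_isBigO_c hOa habs
  have hsc : HasSum (fun d => c m d * q ^ d) (1 / (1 - q) ^ (m + 1)) := hasSum_c habs
  have h1q : 0 < 1 - q := by linarith
  have hpow : 0 < (1 - q) ^ (m + 1) := pow_pos h1q _
  -- bound |tsum| by tsum of abs
  have B1 : |∑' d : ℕ, e d * q ^ d| ≤ ∑' d : ℕ, |e d| * q ^ d := by
    have := norm_tsum_le_tsum_norm (f := fun d : ℕ => e d * q ^ d) ?_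
    · simpa [Real.norm_eq_abs, abs_mul, abs_pow, abs_of_pos hq0] using this
    · apply hs2.congr
      intro d
      simp [Real.norm_eq_abs, abs_mul, abs_pow, abs_of_pos hq0]
  -- split the abs sum
  have hsplit := Summable.sum_add_tsum_nat_add (f := fun d : ℕ => |e d| * q ^ d) N hs2
  have Bhead : ∑ i ∈ range N, |e i| * q ^ i ≤ M := by
    apply Finset.sum_le_sum
    intro i _
    exact mul_le_of_le_one_right (abs_nonneg _) (pow_le_one₀ hq0.le hq1.le)
  have hs2' : Summable (fun n : ℕ => |e (n + N)| * q ^ (n + N)) :=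
    (summable_nat_add_iff N).2 hs2
  have hsc' : Summable (fun n : ℕ => ε / 4 * (c m (n + N) * q ^ (n + N))) :=
    (summable_nat_add_iff N).2 (hsc.summable.mul_left (ε / 4))
  have Btail1 : ∑' n : ℕ, |e (n + N)| * q ^ (n + N)
      ≤ ∑' n : ℕ, ε / 4 * (c m (n + N) * q ^ (n + N)) := by
    apply Summable.tsum_le_tsum _ hs2' hsc'
    intro n
    rw [← mul_assoc]
    exact mul_le_mul_of_nonneg_right (hNe (n + N) (Nat.le_add_left N n))
      (pow_nonneg hq0.le _)
  have Btail2 : ∑' n : ℕ, ε / 4 * (c m (n + N) * q ^ (n + N))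
      = ε / 4 * ∑' n : ℕ, c m (n + N) * q ^ (n + N) := tsum_mul_left
  have Btail3 : ∑' n : ℕ, c m (n + N) * q ^ (n + N) ≤ 1 / (1 - q) ^ (m + 1) := by
    have hsp := Summable.sum_add_tsum_nat_add (f := fun d : ℕ => c m d * q ^ d) N hsc.summable
    have hhead : 0 ≤ ∑ i ∈ range N, c m i * q ^ i :=
      Finset.sum_nonneg fun i _ => mul_nonneg (c_pos m i).le (pow_nonneg hq0.le _)
    rw [hsc.tsum_eq] at hsp
    linarith
  have Bsum : ∑' d : ℕ, |e d| * q ^ d ≤ M + ε / 4 * (1 / (1 - q) ^ (m + 1)) := by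
    rw [← hsplit]
    have := Btail1.trans (Btail2.le.trans (by
      exact mul_le_mul_of_nonneg_left Btail3 (by positivity)))
    linarith
  rw [Real.dist_eq, sub_zero, abs_mul, abs_of_pos hpow]
  have hpm : (1 - q) ^ (m + 1) * (1 / (1 - q) ^ (m + 1)) = 1 := by field_simp
  have hpow_le : (1 - q) ^ (m + 1) ≤ 1 - q := by
    calc (1 - q) ^ (m + 1) ≤ (1 - q) ^ 1 :=
          pow_le_pow_of_le_one h1q.le (by linarith) (by omega)
      _ = 1 - q := pow_one _
  have hδle : δ ≤ ε / (2 * (M + 1)) := min_le_right _ _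
  calc (1 - q) ^ (m + 1) * |∑' d : ℕ, e d * q ^ d|
      ≤ (1 - q) ^ (m + 1) * (M + ε / 4 * (1 / (1 - q) ^ (m + 1))) :=
        mul_le_mul_of_nonneg_left (B1.trans Bsum) hpow.le
    _ = (1 - q) ^ (m + 1) * M + ε / 4 * ((1 - q) ^ (m + 1) * (1 / (1 - q) ^ (m + 1))) := by
        ring
    _ = (1 - q) ^ (m + 1) * M + ε / 4 := by rw [hpm]; ring
    _ < ε := by
        have h1 : (1 - q) ^ (m + 1) * M ≤ (1 - q) * M :=
          mul_le_mul_of_nonneg_right hpow_le hM0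
        have h2 : (1 - q) * M ≤ δ * M := mul_le_mul_of_nonneg_right hqd.le hM0
        have h3 : δ * M ≤ ε / (2 * (M + 1)) * M := mul_le_mul_of_nonneg_right hδle hM0
        have h4 : ε / (2 * (M + 1)) * M < ε / 2 := by
          rw [div_mul_eq_mul_div, div_lt_iff₀ (by positivity)]
          nlinarith
        linarith


end AbelAux

open Filter AbelAux in
theorem abel_type_asymptotic (m : ℕ) (ρ : ℝ) (a : ℕ → ℝ)
    (ha : Filter.Tendsto (fun d : ℕ => a d / (d : ℝ) ^ m) Filter.atTop (nhds ρ)) :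
    (∀ q : ℝ, 0 ≤ q → q < 1 → Summable (fun d : ℕ => a (d + 1) * q ^ (d + 1))) ∧
    Filter.Tendsto
      (fun q : ℝ => (1 - q) ^ (m + 1) * ∑' d : ℕ, a (d + 1) * q ^ (d + 1))
      (nhdsWithin 1 (Set.Iio 1)) (nhds (ρ * Nat.factorial m)) := by
  classical
  set L : ℝ := ρ * Nat.factorial m with hL
  have ha' : Tendsto (fun d : ℕ => a (d + 1) / ((d : ℝ) + 1) ^ m) atTop (nhds ρ) := by
    have h := ha.comp (tendsto_add_atTop_nat 1)
    refine h.congr fun d => ?_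
    simp only [Function.comp_apply]
    push_cast
    ring_nf
  have hb : Tendsto (fun d : ℕ => a (d + 1) / c m d) atTop (nhds L) := by
    have h2 := ha'.mul (tendsto_ratio m)
    refine h2.congr fun d => ?_
    have h1 : ((d : ℝ) + 1) ^ m ≠ 0 := by positivity
    have hc := (c_pos m d).ne'
    field_simp
  have hOb : (fun d : ℕ => a (d + 1)) =O[atTop] fun d => c m d :=
    isBigO_c_of_tendsto hb
  have hsumm : ∀ q : ℝ, 0 ≤ q → q < 1 → Summable (fun d : ℕ => a (d + 1) * q ^ (d + 1)) := by
    intro q h0 h1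
    have habs : |q| < 1 := abs_lt.2 ⟨by linarith, h1⟩
    have hs := (summable_of_isBigO_c hOb habs).mul_right q
    refine hs.congr fun d => ?_
    rw [pow_succ]; ring
  refine ⟨hsumm, ?_⟩
  set e : ℕ → ℝ := fun d => a (d + 1) - L * c m d with he
  have he0 : Tendsto (fun d => e d / c m d) atTop (nhds 0) := by
    have h2 := hb.sub_const L
    rw [sub_self] at h2
    refine h2.congr fun d => ?_
    have hc := (c_pos m d).ne'
    simp only [he]
    rw [sub_div, mul_div_assoc, div_self hc, mul_one]
  have G := main0 he0
  have hid : Tendsto (fun q : ℝ => q) (nhdsWithin (1:ℝ) (Set.Iio 1)) (nhds 1) :=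
    tendsto_id.mono_left nhdsWithin_le_nhds
  have Hlim : Tendsto
      (fun q : ℝ => q * ((1 - q) ^ (m + 1) * ∑' d : ℕ, e d * q ^ d) + q * L)
      (nhdsWithin (1:ℝ) (Set.Iio 1)) (nhds (1 * 0 + 1 * L)) :=
    (hid.mul G).add (hid.mul tendsto_const_nhds)
  rw [show (1:ℝ) * 0 + 1 * L = L by ring] at Hlim
  refine Hlim.congr' ?_
  filter_upwards [Ioo_mem_nhdsLT_of_mem
    (Set.mem_Ioc.2 ⟨zero_lt_one, le_refl (1:ℝ)⟩ : (1:ℝ) ∈ Set.Ioc 0 1)] with q hq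
  have hq0 : (0:ℝ) < q := hq.1
  have hq1 : q < 1 := hq.2
  have habs : |q| < 1 := abs_lt.2 ⟨by linarith, hq1⟩
  have hne : ((1:ℝ) - q) ^ (m + 1) ≠ 0 := pow_ne_zero _ (by linarith)
  have hse : Summable (fun d : ℕ => e d * q ^ d) :=
    summable_of_isBigO_c (isBigO_c_of_tendsto he0) habs
  have hsc : HasSum (fun d : ℕ => c m d * q ^ d) (1 / (1 - q) ^ (m + 1)) := hasSum_c habs
  have h1 : ∀ d : ℕ, a (d + 1) * q ^ (d + 1)
      = (e d * q ^ d + L * (c m d * q ^ d)) * q := by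
    intro d
    simp only [he]
    rw [pow_succ]; ring
  rw [tsum_congr h1, tsum_mul_right, Summable.tsum_add hse (hsc.summable.mul_left L),
    tsum_mul_left, hsc.tsum_eq]
  field_simp
end
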